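/- Contraction bound for the non-unitary propagator: if V_t solves dV_t/dt = −i K_t V_t with V_0 = 1 and K_t − K_t† = −i L†L, then for every vector ψ, ‖V_t ψ‖² ≥ e^{−‖L‖² t}·‖ψ‖², hence V_t† V_t ≥ e^{−‖L‖² t}·1 and V_t V_t† ≥ e^{−‖L‖² t}·1 in the Loewner order. -/

import Mathlib

open Matrix
open scoped ComplexOrder

/-- The operator norm (2→2 norm) of a matrix. -/
noncomputable def opNorm {m : Type*} [Fintype m] [DecidableEq m] (M : Matrix m m ℂ) : ℝ :=
  ‖Matrix.toEuclideanCLM (𝕜 := ℂ) M‖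

namespace PropagatorAux

lemma hasDerivAt_normSq_comp {w : ℝ → ℂ} {w' : ℂ} {t : ℝ} (h : HasDerivAt w w' t) :
    HasDerivAt (fun u => Complex.normSq (w u)) (2 * ((starRingEnd ℂ) (w t) * w').re) t := by
  have hre : HasDerivAt (fun u => (w u).re) w'.re t :=
    Complex.reCLM.hasFDerivAt.comp_hasDerivAt t h
  have him : HasDerivAt (fun u => (w u).im) w'.im t :=
    Complex.imCLM.hasFDerivAt.comp_hasDerivAt t h
  have h2 : HasDerivAt (fun u => (w u).re * (w u).re + (w u).im * (w u).im) _ t :=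
    (hre.mul hre).add (him.mul him)
  convert h2 using 1
  · simp [Complex.mul_re, Complex.normSq_apply]
  · simp only [Complex.mul_re, Complex.conj_re, Complex.conj_im]; ring

lemma star_dot_self {n : ℕ} (y : Fin n → ℂ) :
    star y ⬝ᵥ y = ((∑ i, Complex.normSq (y i) : ℝ) : ℂ) := by
  simp only [dotProduct, Pi.star_apply, Complex.ofReal_sum]
  refine Finset.sum_congr rfl fun i _ => ?_
  rw [Complex.star_def, mul_comm, Complex.mul_conj]

lemma star_dot_mulVec_conj {n : ℕ} (M : Matrix (Fin n) (Fin n) ℂ) (x : Fin n → ℂ) :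
    star (star x ⬝ᵥ (M *ᵥ x)) = star x ⬝ᵥ (Mᴴ *ᵥ x) := by
  rw [← star_dotProduct, star_mulVec, ← dotProduct_mulVec]

lemma quad_conjTranspose_mul {n : ℕ} (M : Matrix (Fin n) (Fin n) ℂ) (x : Fin n → ℂ) :
    star x ⬝ᵥ ((Mᴴ * M) *ᵥ x) = star (M *ᵥ x) ⬝ᵥ (M *ᵥ x) := by
  rw [star_mulVec, ← dotProduct_mulVec, ← mulVec_mulVec]

lemma dissipation {n : ℕ} (K L : Matrix (Fin n) (Fin n) ℂ)
    (hKL : K - Kᴴ = (-Complex.I) • (Lᴴ * L)) (x : Fin n → ℂ) :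
    ∑ i, 2 * ((starRingEnd ℂ) (x i) * (-Complex.I * (K *ᵥ x) i)).re
      = -∑ i, Complex.normSq ((L *ᵥ x) i) := by
  set z : ℂ := star x ⬝ᵥ (K *ᵥ x) with hz
  set s : ℝ := ∑ i, Complex.normSq ((L *ᵥ x) i) with hs
  have key : z - star z = -Complex.I * (s : ℂ) := by
    rw [hz, star_dot_mulVec_conj, ← dotProduct_sub, ← sub_mulVec, hKL,
      smul_mulVec, dotProduct_smul, smul_eq_mul,
      quad_conjTranspose_mul, star_dot_self]
  have him : 2 * z.im = -s := by
    have h2 := congrArg Complex.im key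
    simp at h2; linarith
  have hzsum : -Complex.I * z = ∑ i, (starRingEnd ℂ) (x i) * (-Complex.I * (K *ᵥ x) i) := by
    rw [hz]
    simp only [dotProduct, Pi.star_apply, Finset.mul_sum, Complex.star_def]
    exact Finset.sum_congr rfl fun i _ => by ring
  have hre : (-Complex.I * z).re = z.im := by simp
  calc ∑ i, 2 * ((starRingEnd ℂ) (x i) * (-Complex.I * (K *ᵥ x) i)).re
      = 2 * (∑ i, (starRingEnd ℂ) (x i) * (-Complex.I * (K *ᵥ x) i)).re := by
        rw [Complex.re_sum, Finset.mul_sum]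
    _ = 2 * (-Complex.I * z).re := by rw [hzsum]
    _ = -s := by rw [hre]; linarith

lemma norm_sq_eq {n : ℕ} (ψ : EuclideanSpace ℂ (Fin n)) :
    ‖ψ‖ ^ 2 = ∑ i, Complex.normSq (ψ i) := by
  rw [EuclideanSpace.norm_eq, Real.sq_sqrt (by positivity)]
  simp [Complex.sq_norm]

lemma clm_norm_sq_eq {n : ℕ} (M : Matrix (Fin n) (Fin n) ℂ) (ψ : EuclideanSpace ℂ (Fin n)) :
    ‖Matrix.toEuclideanCLM (𝕜 := ℂ) M ψ‖ ^ 2 = ∑ i, Complex.normSq ((M *ᵥ ψ) i) := by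
  rw [norm_sq_eq]; rfl

lemma mulVec_normSq_le {n : ℕ} (L : Matrix (Fin n) (Fin n) ℂ) (x : Fin n → ℂ) :
    ∑ i, Complex.normSq ((L *ᵥ x) i) ≤ (opNorm L) ^ 2 * ∑ i, Complex.normSq (x i) := by
  set ψ : EuclideanSpace ℂ (Fin n) := (WithLp.equiv 2 _).symm x with hψ
  have h1 := (Matrix.toEuclideanCLM (𝕜 := ℂ) L).le_opNorm ψ
  have h2 : ‖Matrix.toEuclideanCLM (𝕜 := ℂ) L ψ‖ ^ 2 ≤ (opNorm L) ^ 2 * ‖ψ‖ ^ 2 := by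
    rw [show (opNorm L)^2 * ‖ψ‖^2 = (opNorm L * ‖ψ‖)^2 by ring]
    exact pow_le_pow_left₀ (norm_nonneg _) h1 2
  rw [clm_norm_sq_eq, norm_sq_eq] at h2
  exact h2

lemma gronwall_key {n : ℕ}
    (K : ℝ → Matrix (Fin n) (Fin n) ℂ)
    (L : Matrix (Fin n) (Fin n) ℂ)
    (hKL : ∀ t, K t - (K t)ᴴ = (-Complex.I) • (Lᴴ * L))
    (V : ℝ → Matrix (Fin n) (Fin n) ℂ)
    (hVderiv : ∀ t, ∀ i j : Fin n,
      HasDerivAt (fun u => V u i j) (((-Complex.I) • (K t * V t)) i j) t)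
    (hV0 : V 0 = 1) (ψ : Fin n → ℂ) (t : ℝ) (ht : 0 ≤ t) :
    Real.exp (-(opNorm L) ^ 2 * t) * ∑ i, Complex.normSq (ψ i)
      ≤ ∑ i, Complex.normSq ((V t *ᵥ ψ) i) := by
  set C : ℝ := (opNorm L) ^ 2 with hC
  have hC0 : 0 ≤ C := by positivity
  have hw : ∀ u : ℝ, ∀ i : Fin n,
      HasDerivAt (fun s => (V s *ᵥ ψ) i) (-Complex.I * (K u *ᵥ (V u *ᵥ ψ)) i) u := by
    intro u i
    have h1 : HasDerivAt (fun s => ∑ j, V s i j * ψ j)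
        (∑ j, ((-Complex.I) • (K u * V u)) i j * ψ j) u :=
      HasDerivAt.fun_sum (fun j _ => (hVderiv u i j).mul_const (ψ j))
    have e1 : (fun s => (V s *ᵥ ψ) i) = fun s => ∑ j, V s i j * ψ j := by
      funext s; simp [Matrix.mulVec, dotProduct]
    have e2 : ∑ j, ((-Complex.I) • (K u * V u)) i j * ψ j
        = -Complex.I * (K u *ᵥ (V u *ᵥ ψ)) i := by
      rw [Matrix.mulVec_mulVec]
      simp [Matrix.mulVec, dotProduct, Finset.mul_sum, mul_assoc]
    rw [e1]; rw [e2] at h1; exact h1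
  set f : ℝ → ℝ := fun u => ∑ i, Complex.normSq ((V u *ᵥ ψ) i) with hf
  have hfderiv : ∀ u : ℝ,
      HasDerivAt f (-∑ i, Complex.normSq ((L *ᵥ (V u *ᵥ ψ)) i)) u := by
    intro u
    have h1 : HasDerivAt f
        (∑ i, 2 * ((starRingEnd ℂ) ((V u *ᵥ ψ) i) * (-Complex.I * (K u *ᵥ (V u *ᵥ ψ)) i)).re) u :=
      HasDerivAt.fun_sum (fun i _ => hasDerivAt_normSq_comp (hw u i))
    rwa [dissipation (K u) L (hKL u) (V u *ᵥ ψ)] at h1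
  set g : ℝ → ℝ := fun u => Real.exp (C * u) * f u with hg
  have hgderiv : ∀ u : ℝ, HasDerivAt g
      (Real.exp (C * u) * C * f u + Real.exp (C * u) * (-∑ i, Complex.normSq ((L *ᵥ (V u *ᵥ ψ)) i))) u := by
    intro u
    have := (((hasDerivAt_id u).const_mul C).exp).mul (hfderiv u)
    simp only [id, mul_one] at this
    exact this
  have hgmono : Monotone g := by
    refine monotone_of_deriv_nonneg (fun u => (hgderiv u).differentiableAt) (fun u => ?_)
    rw [(hgderiv u).deriv]
    have hle := mulVec_normSq_le L (V u *ᵥ ψ)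
    have hexp : (0:ℝ) < Real.exp (C * u) := Real.exp_pos _
    rw [← hC] at hle
    have hkey : 0 ≤ Real.exp (C * u) * (C * f u - ∑ i, Complex.normSq ((L *ᵥ (V u *ᵥ ψ)) i)) :=
      mul_nonneg hexp.le (sub_nonneg.mpr hle)
    simp only [hf] at hkey ⊢
    nlinarith [hkey]
  have h0 : g 0 = ∑ i, Complex.normSq (ψ i) := by
    simp [hg, hf, hV0, Matrix.one_mulVec]
  have hmono := hgmono ht
  rw [h0] at hmono
  have hstep : Real.exp (-C * t) * ∑ i, Complex.normSq (ψ i) ≤ Real.exp (-C * t) * g t :=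
    mul_le_mul_of_nonneg_left hmono (Real.exp_pos _).le
  calc Real.exp (-C * t) * ∑ i, Complex.normSq (ψ i)
      ≤ Real.exp (-C * t) * (Real.exp (C * t) * f t) := hstep
    _ = f t := by rw [← mul_assoc, ← Real.exp_add]; ring_nf; simp

lemma psd_of_bound {n : ℕ} (M : Matrix (Fin n) (Fin n) ℂ) (c : ℝ)
    (h : ∀ x : Fin n → ℂ, c * (∑ i, Complex.normSq (x i)) ≤ ∑ i, Complex.normSq ((M *ᵥ x) i)) :
    (Mᴴ * M - (c : ℂ) • (1 : Matrix (Fin n) (Fin n) ℂ)).PosSemidef := by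
  refine Matrix.PosSemidef.of_dotProduct_mulVec_nonneg ?_ ?_
  · unfold Matrix.IsHermitian
    rw [conjTranspose_sub, conjTranspose_smul, conjTranspose_mul, conjTranspose_conjTranspose,
      conjTranspose_one]
    simp [Complex.star_def, Complex.conj_ofReal]
  · intro x
    have e1 : star x ⬝ᵥ ((Mᴴ * M - (c : ℂ) • 1) *ᵥ x)
        = star x ⬝ᵥ ((Mᴴ * M) *ᵥ x) - (c : ℂ) * (star x ⬝ᵥ x) := by
      rw [sub_mulVec, dotProduct_sub, smul_mulVec, one_mulVec, dotProduct_smul, smul_eq_mul]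
    rw [e1, quad_conjTranspose_mul, star_dot_self, star_dot_self, ← Complex.ofReal_mul,
      ← Complex.ofReal_sub]
    rw [Complex.zero_le_real]
    linarith [h x]

lemma adjoint_bound {n : ℕ} (T : EuclideanSpace ℂ (Fin n) →L[ℂ] EuclideanSpace ℂ (Fin n))
    {c : ℝ} (hc : 0 < c) (h : ∀ ψ, c * ‖ψ‖ ^ 2 ≤ ‖T ψ‖ ^ 2) :
    ∀ ψ, c * ‖ψ‖ ^ 2 ≤ ‖ContinuousLinearMap.adjoint T ψ‖ ^ 2 := by
  have hinj : Function.Injective T := by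
    intro a b hab
    have hT0 : T (a - b) = 0 := by rw [map_sub, hab, sub_self]
    have h2 := h (a - b)
    rw [hT0, norm_zero] at h2
    have h3 : ‖a - b‖ ^ 2 ≤ 0 := by nlinarith
    have h4 : ‖a - b‖ = 0 := by nlinarith [sq_nonneg ‖a - b‖, norm_nonneg (a - b)]
    rwa [norm_eq_zero, sub_eq_zero] at h4
  have hsurj : Function.Surjective T :=
    LinearMap.injective_iff_surjective.mp hinj
  intro x
  rcases hsurj x with ⟨y, rfl⟩
  set z := ContinuousLinearMap.adjoint T (T y) with hz
  have hinner : (inner ℂ (T y) (T y) : ℂ) = inner ℂ y z := by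
    rw [hz, ContinuousLinearMap.adjoint_inner_right]
  have h1 : ‖T y‖ ^ 2 ≤ ‖y‖ * ‖z‖ := by
    rw [← inner_self_eq_norm_sq (𝕜 := ℂ) (T y), hinner]
    calc (inner ℂ y z : ℂ).re ≤ ‖(inner ℂ y z : ℂ)‖ := Complex.re_le_norm _
      _ ≤ ‖y‖ * ‖z‖ := norm_inner_le_norm _ _
  have h2 := h y
  by_cases hy : ‖T y‖ = 0
  · have hTy0 : T y = 0 := norm_eq_zero.mp hy
    rw [hz, hTy0]
    simp
  · have hTy : 0 < ‖T y‖ ^ 2 := by positivity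
    have a1 : ‖T y‖ ^ 2 * ‖T y‖ ^ 2 ≤ (‖y‖ * ‖z‖) * (‖y‖ * ‖z‖) :=
      mul_le_mul h1 h1 (by positivity) (by positivity)
    have a3 : (c * ‖y‖ ^ 2) * ‖z‖ ^ 2 ≤ ‖T y‖ ^ 2 * ‖z‖ ^ 2 :=
      mul_le_mul_of_nonneg_right h2 (sq_nonneg _)
    nlinarith [mul_le_mul_of_nonneg_left a1 hc.le, a3, hTy]

end PropagatorAux

open PropagatorAux in
/-- Contraction bound for the non-unitary propagator: if `dV_t/dt = −iK_tV_t`, `V_0 = 1`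
and `K_t − K_t† = −iL†L`, then `‖V_tψ‖² ≥ e^{−‖L‖²t}‖ψ‖²` for every `ψ`, hence
`V_t†V_t ≥ e^{−‖L‖²t}·1` and `V_tV_t† ≥ e^{−‖L‖²t}·1` in the Loewner order. -/
theorem propagator_contraction_bound {n : ℕ}
    (K : ℝ → Matrix (Fin n) (Fin n) ℂ)
    (hKcont : ∀ i j : Fin n, Continuous fun t => K t i j)
    (L : Matrix (Fin n) (Fin n) ℂ)
    (hKL : ∀ t, K t - (K t)ᴴ = (-Complex.I) • (Lᴴ * L))
    (V : ℝ → Matrix (Fin n) (Fin n) ℂ)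
    (hVderiv : ∀ t, ∀ i j : Fin n,
      HasDerivAt (fun u => V u i j) (((-Complex.I) • (K t * V t)) i j) t)
    (hV0 : V 0 = 1) :
    ∀ t : ℝ, 0 ≤ t →
      (∀ ψ : EuclideanSpace ℂ (Fin n),
        ‖Matrix.toEuclideanCLM (𝕜 := ℂ) (V t) ψ‖ ^ 2 ≥
          Real.exp (-(opNorm L) ^ 2 * t) * ‖ψ‖ ^ 2) ∧
      ((V t)ᴴ * V t - (Real.exp (-(opNorm L) ^ 2 * t) : ℂ) •
        (1 : Matrix (Fin n) (Fin n) ℂ)).PosSemidef ∧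
      (V t * (V t)ᴴ - (Real.exp (-(opNorm L) ^ 2 * t) : ℂ) •
        (1 : Matrix (Fin n) (Fin n) ℂ)).PosSemidef := by
  intro t ht
  set c : ℝ := Real.exp (-(opNorm L) ^ 2 * t) with hcdef
  have hc : 0 < c := Real.exp_pos _
  have key : ∀ x : Fin n → ℂ,
      c * ∑ i, Complex.normSq (x i) ≤ ∑ i, Complex.normSq ((V t *ᵥ x) i) :=
    fun x => gronwall_key K L hKL V hVderiv hV0 x t ht
  have part1 : ∀ ψ : EuclideanSpace ℂ (Fin n),
      ‖Matrix.toEuclideanCLM (𝕜 := ℂ) (V t) ψ‖ ^ 2 ≥ c * ‖ψ‖ ^ 2 := by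
    intro ψ
    rw [ge_iff_le, clm_norm_sq_eq, norm_sq_eq]
    exact key ψ
  refine ⟨part1, psd_of_bound (V t) c key, ?_⟩
  -- adjoint part
  have hadj : Matrix.toEuclideanCLM (𝕜 := ℂ) ((V t)ᴴ)
      = ContinuousLinearMap.adjoint (Matrix.toEuclideanCLM (𝕜 := ℂ) (V t)) := by
    rw [← Matrix.star_eq_conjTranspose, map_star, ContinuousLinearMap.star_eq_adjoint]
  have hbound := adjoint_bound (Matrix.toEuclideanCLM (𝕜 := ℂ) (V t)) hc
    (fun ψ => part1 ψ)
  have keyH : ∀ x : Fin n → ℂ,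
      c * ∑ i, Complex.normSq (x i) ≤ ∑ i, Complex.normSq (((V t)ᴴ *ᵥ x) i) := by
    intro x
    have := hbound ((WithLp.equiv 2 _).symm x)
    rw [← hadj, clm_norm_sq_eq, norm_sq_eq] at this
    exact this
  have := psd_of_bound ((V t)ᴴ) c keyH
  rwa [conjTranspose_conjTranspose] at this
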